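/- Let d ≥ 2, let ρ be a d × d density matrix, and let 0 < s′ < s. Then the set { η : η is a d × d density matrix and S_{m,ρ,s′}(η) ≥ 0 for all m ∈ {1, …, d} } is a strict subset of the set { η : η is a d × d density matrix and S_{m,ρ,s}(η) ≥ 0 for all m ∈ {1, …, d} }. -/

import Mathlib

open scoped ComplexOrder

/-- A density matrix: positive semidefinite (hence Hermitian) with trace 1. -/
def IsDensityMatrix {d : ℕ} (A : Matrix (Fin d) (Fin d) ℂ) : Prop :=
  A.PosSemidef ∧ A.trace = 1

/-- `Spoly A m` is the recursively defined quantity `S_m(A)`. -/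
noncomputable def Spoly {d : ℕ} (A : Matrix (Fin d) (Fin d) ℂ) : ℕ → ℂ
  | 0 => 1
  | m + 1 => ((m : ℂ) + 1)⁻¹ *
      ∑ l ∈ Finset.range (m + 1), (-1 : ℂ) ^ l * (A ^ (l + 1)).trace * Spoly A (m - l)

/-- `Sres ρ s m η = S_{m,ρ,s}(η) = S_m(((1+s)η − ρ)/s)`. -/
noncomputable def Sres {d : ℕ} (ρ : Matrix (Fin d) (Fin d) ℂ) (s : ℝ) (m : ℕ)
    (η : Matrix (Fin d) (Fin d) ℂ) : ℂ :=
  Spoly ((s : ℂ)⁻¹ • (((1 : ℂ) + (s : ℂ)) • η - ρ)) m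

namespace DRS

open Finset Matrix

variable {d : ℕ}

/-- elementary symmetric function of the values of `μ`. -/
noncomputable def esymmR (μ : Fin d → ℝ) (m : ℕ) : ℝ :=
  ((Finset.univ.val.map μ).esymm m)

lemma esymmR_zero (μ : Fin d → ℝ) : esymmR μ 0 = 1 := by
  simp [esymmR, Multiset.esymm]

lemma esymmR_eq_sum (μ : Fin d → ℝ) (m : ℕ) :
    esymmR μ m = ∑ t ∈ Finset.univ.powersetCard m, t.prod μ := by
  rw [esymmR, Finset.esymm_map_val]

lemma esymmR_nonneg {μ : Fin d → ℝ} (hμ : ∀ i, 0 ≤ μ i) (m : ℕ) : 0 ≤ esymmR μ m := by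
  rw [esymmR_eq_sum]
  exact Finset.sum_nonneg fun t _ => Finset.prod_nonneg fun i _ => hμ i

/-- Newton's identity, evaluated form. -/
lemma newton (μ : Fin d → ℝ) (k : ℕ) :
    ((k : ℝ) + 1) * esymmR μ (k + 1) =
      ∑ l ∈ Finset.range (k + 1), (-1 : ℝ) ^ l * (∑ i, μ i ^ (l + 1)) * esymmR μ (k - l) := by
  have h := MvPolynomial.mul_esymm_eq_sum (Fin d) ℝ (k + 1)
  have h2 := congrArg (MvPolynomial.aeval μ) h
  simp only [_root_.map_mul, map_natCast, _root_.map_sum, _root_.map_pow, _root_.map_neg,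
    _root_.map_one,
    MvPolynomial.aeval_esymm_eq_multiset_esymm, MvPolynomial.psum, MvPolynomial.aeval_X] at h2
  rw [Finset.sum_filter, Finset.Nat.sum_antidiagonal_eq_sum_range_succ_mk,
    Finset.sum_range_succ] at h2
  simp only [lt_self_iff_false, if_false, add_zero] at h2
  have h3 : ((k : ℝ) + 1) * esymmR μ (k + 1) = (-1 : ℝ) ^ (k + 1 + 1) *
      ∑ j ∈ Finset.range (k + 1), (-1 : ℝ) ^ j * esymmR μ j * (∑ i, μ i ^ (k + 1 - j)) := by
    rw [esymmR]
    push_cast at h2 ⊢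
    rw [h2]
    congr 1
    refine Finset.sum_congr rfl fun j hj => ?_
    rw [if_pos (Finset.mem_range.mp hj), esymmR]
  rw [h3, Finset.mul_sum, ← Finset.sum_range_reflect]
  refine Finset.sum_congr rfl fun l hl => ?_
  rw [Finset.mem_range] at hl
  simp only [Nat.add_sub_cancel]
  have h4 : k + 1 - (k - l) = l + 1 := by omega
  have h5 : (-1 : ℝ) ^ (k + 1 + 1) * (-1 : ℝ) ^ (k - l) = (-1 : ℝ) ^ l := by
    rw [← pow_add]
    have : k + 1 + 1 + (k - l) = l + 2 * (k - l + 1) := by omega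
    rw [this, pow_add, pow_mul]
    simp
  rw [h4, ← h5]
  ring


lemma trace_pow {A : Matrix (Fin d) (Fin d) ℂ} (hA : A.IsHermitian) (l : ℕ) :
    (A ^ l).trace = ((∑ i, hA.eigenvalues i ^ l : ℝ) : ℂ) := by
  set U : Matrix (Fin d) (Fin d) ℂ := (hA.eigenvectorUnitary : Matrix (Fin d) (Fin d) ℂ)
  set D : Matrix (Fin d) (Fin d) ℂ := Matrix.diagonal (RCLike.ofReal ∘ hA.eigenvalues)
  have hU : U * star U = 1 := (Matrix.mem_unitaryGroup_iff).mp hA.eigenvectorUnitary.2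
  have hpow : A ^ l = U * D ^ l * star U := by
    induction l with
    | zero => simpa using hU.symm
    | succ n ihn =>
      have hUs : star U * U = 1 := (Matrix.mem_unitaryGroup_iff').mp hA.eigenvectorUnitary.2
      rw [pow_succ, ihn, pow_succ]
      conv_lhs => rw [hA.spectral_theorem, Unitary.conjStarAlgAut_apply]
      rw [show U * D ^ n * star U * (U * D * star U) = U * D ^ n * (star U * U) * D * star U by
        noncomm_ring]
      rw [hUs, mul_one, Matrix.mul_assoc U (D ^ n) D]
  rw [hpow, Matrix.trace_mul_cycle,
    (Matrix.mem_unitaryGroup_iff').mp hA.eigenvectorUnitary.2, Matrix.one_mul,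
    Matrix.diagonal_pow, Matrix.trace_diagonal]
  push_cast
  rfl

lemma spoly_eq {A : Matrix (Fin d) (Fin d) ℂ} (hA : A.IsHermitian) (m : ℕ) :
    Spoly A m = ((esymmR hA.eigenvalues m : ℝ) : ℂ) := by
  induction m using Nat.strong_induction_on with
  | _ m ih =>
    match m with
    | 0 => simp [Spoly, esymmR_zero]
    | k + 1 =>
      rw [Spoly]
      have hsum : ∑ l ∈ Finset.range (k + 1), (-1 : ℂ) ^ l * (A ^ (l + 1)).trace *
          Spoly A (k - l) =
          ((∑ l ∈ Finset.range (k + 1), (-1 : ℝ) ^ l * (∑ i, hA.eigenvalues i ^ (l + 1)) *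
            esymmR hA.eigenvalues (k - l) : ℝ) : ℂ) := by
        push_cast
        refine Finset.sum_congr rfl fun l hl => ?_
        rw [trace_pow hA, ih (k - l) (by omega)]
        push_cast
        ring
      rw [hsum, ← newton]
      have hk : ((k : ℂ) + 1) ≠ 0 := Nat.cast_add_one_ne_zero k
      push_cast
      field_simp

lemma eigenvalues_nonneg_of_esymm {μ : Fin d → ℝ}
    (hE : ∀ m ∈ Finset.Icc 1 d, 0 ≤ esymmR μ m) : ∀ i, 0 ≤ μ i := by
  intro i
  by_contra hneg
  push_neg at hneg
  obtain ⟨x, hxpos, hmi⟩ : ∃ x : ℝ, 0 < x ∧ μ i = -x := ⟨-μ i, by linarith, by ring⟩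
  set t : Multiset ℝ := Multiset.map μ Finset.univ.val with ht
  have hcard : Multiset.card (Multiset.map Neg.neg t) = d := by simp [ht]
  have hV := Multiset.prod_X_add_C_eq_sum_esymm (Multiset.map Neg.neg t)
  have hEv := congrArg (Polynomial.eval (μ i)) hV
  rw [Polynomial.eval_multiset_prod, Multiset.map_map, Multiset.map_map] at hEv
  rw [hcard] at hEv
  have hL : (Multiset.map ((Polynomial.eval (μ i) ∘ fun r => Polynomial.X + Polynomial.C r)
      ∘ Neg.neg) t).prod = 0 := by
    have : ((Polynomial.eval (μ i) ∘ fun r => Polynomial.X + Polynomial.C r) ∘ Neg.neg)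
        = fun r => μ i - r := by
      funext r; simp [sub_eq_add_neg]
    rw [this, ht, Multiset.map_map]
    have : (fun r => μ i - r) ∘ μ = fun j => μ i - μ j := rfl
    rw [this, ← Finset.prod_eq_multiset_prod]
    exact Finset.prod_eq_zero (Finset.mem_univ i) (sub_self _)
  rw [hL] at hEv
  have hR : (0 : ℝ) = ∑ j ∈ Finset.range (d + 1), (-1 : ℝ) ^ j * esymmR μ j * (μ i) ^ (d - j) := by
    rw [hEv]
    rw [Polynomial.eval_finset_sum]
    refine Finset.sum_congr rfl fun j hj => ?_
    rw [Multiset.esymm_neg]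
    simp [esymmR, ht, mul_comm]
  have hsum : (0 : ℝ) = (-1) ^ d * ∑ j ∈ Finset.range (d + 1), esymmR μ j * x ^ (d - j) := by
    rw [hR, Finset.mul_sum]
    refine Finset.sum_congr rfl fun j hj => ?_
    rw [Finset.mem_range] at hj
    have hjd : j + (d - j) = d := by omega
    have hs : (-1 : ℝ) ^ j * (-1 : ℝ) ^ (d - j) = (-1) ^ d := by rw [← pow_add, hjd]
    rw [hmi, neg_pow, ← hs]
    ring
  have hpos : 0 < ∑ j ∈ Finset.range (d + 1), esymmR μ j * x ^ (d - j) := by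
    refine Finset.sum_pos' (fun j hj => ?_) ⟨0, Finset.mem_range.mpr (Nat.succ_pos d), ?_⟩
    · rw [Finset.mem_range] at hj
      refine mul_nonneg ?_ (by positivity)
      rcases Nat.eq_zero_or_pos j with h0 | h1
      · simp [h0, esymmR_zero]
      · exact hE j (Finset.mem_Icc.mpr ⟨h1, by omega⟩)
    · rw [esymmR_zero, one_mul]
      positivity
  rcases mul_eq_zero.mp hsum.symm with h | h
  · exact (pow_ne_zero d (by norm_num : (-1 : ℝ) ≠ 0)) h
  · exact hpos.ne' h

lemma spoly_nonneg_iff_posSemidef {A : Matrix (Fin d) (Fin d) ℂ} (hA : A.IsHermitian) :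
    (∀ m ∈ Finset.Icc 1 d, 0 ≤ Spoly A m) ↔ A.PosSemidef := by
  constructor
  · intro h
    refine hA.posSemidef_iff_eigenvalues_nonneg.mpr (eigenvalues_nonneg_of_esymm fun m hm => ?_)
    have h2 := h m hm
    rw [spoly_eq hA] at h2
    exact Complex.zero_le_real.mp h2
  · intro h m _
    rw [spoly_eq hA]
    exact Complex.zero_le_real.mpr (esymmR_nonneg (fun i => h.eigenvalues_nonneg i) m)

lemma smul_psd {M : Matrix (Fin d) (Fin d) ℂ} {r : ℝ} (hr : 0 ≤ r) (hM : M.PosSemidef) :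
    ((r : ℂ) • M).PosSemidef := by
  rw [Matrix.posSemidef_iff_dotProduct_mulVec]
  constructor
  · show ((r : ℂ) • M)ᴴ = (r : ℂ) • M
    rw [Matrix.conjTranspose_smul, hM.1.eq, Complex.star_def, Complex.conj_ofReal]
  · intro x
    rw [Matrix.smul_mulVec, dotProduct_smul, smul_eq_mul]
    exact mul_nonneg (Complex.zero_le_real.mpr hr) (hM.dotProduct_mulVec_nonneg x)

lemma psd_diag_nonneg {M : Matrix (Fin d) (Fin d) ℂ} (hM : M.PosSemidef) (i : Fin d) :
    0 ≤ M i i := by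
  exact hM.diag_nonneg

lemma hermitian_comb {ρ η : Matrix (Fin d) (Fin d) ℂ} (hρ : ρ.IsHermitian)
    (hη : η.IsHermitian) (a b : ℝ) :
    ((a : ℂ) • ((b : ℂ) • η - ρ)).IsHermitian := by
  show ((a : ℂ) • ((b : ℂ) • η - ρ))ᴴ = _
  rw [Matrix.conjTranspose_smul, Matrix.conjTranspose_sub, Matrix.conjTranspose_smul,
    hρ.eq, hη.eq, Complex.star_def, Complex.conj_ofReal, Complex.conj_ofReal]

lemma sres_iff {ρ η : Matrix (Fin d) (Fin d) ℂ} (hρ : ρ.IsHermitian) (hη : η.IsHermitian)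
    {s : ℝ} (hs : 0 < s) :
    (∀ m ∈ Finset.Icc 1 d, 0 ≤ Sres ρ s m η) ↔
      (((1 : ℂ) + (s : ℂ)) • η - ρ).PosSemidef := by
  have h1 : ((1 : ℂ) + (s : ℂ)) = (((1 + s : ℝ) : ℂ)) := by push_cast; ring
  have hA : ((s : ℂ)⁻¹ • (((1 : ℂ) + (s : ℂ)) • η - ρ)).IsHermitian := by
    have := hermitian_comb hρ hη s⁻¹ (1 + s)
    rw [← h1] at this
    rw [show ((s⁻¹ : ℝ) : ℂ) = (s : ℂ)⁻¹ by push_cast; ring] at this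
    exact this
  have := spoly_nonneg_iff_posSemidef hA
  unfold Sres
  rw [this]
  constructor
  · intro h
    have h2 := smul_psd (le_of_lt hs) h
    rw [smul_smul, show ((s : ℝ) : ℂ) * (s : ℂ)⁻¹ = 1 by
      field_simp] at h2
    rwa [one_smul] at h2
  · intro h
    have h2 := smul_psd (le_of_lt (inv_pos.mpr hs)) h
    rwa [show ((s⁻¹ : ℝ) : ℂ) = (s : ℂ)⁻¹ by push_cast; ring] at h2

end DRS

/-- For `d ≥ 2`, a density matrix `ρ`, and `0 < s′ < s`, the set of density matrices `η`
with `S_{m,ρ,s′}(η) ≥ 0` for all `m ∈ {1, …, d}` is a strict subset of the corresponding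
set for `s`. -/


theorem detection_region_ssubset {d : ℕ} (hd : 2 ≤ d)
    (ρ : Matrix (Fin d) (Fin d) ℂ) (hρ : IsDensityMatrix ρ)
    (s s' : ℝ) (hs' : 0 < s') (hss : s' < s) :
    {η : Matrix (Fin d) (Fin d) ℂ | IsDensityMatrix η ∧
        ∀ m ∈ Finset.Icc 1 d, 0 ≤ Sres ρ s' m η} ⊂
      {η : Matrix (Fin d) (Fin d) ℂ | IsDensityMatrix η ∧
        ∀ m ∈ Finset.Icc 1 d, 0 ≤ Sres ρ s m η} := by
  classical
  have hs : 0 < s := hs'.trans hss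
  have hρH : ρ.IsHermitian := hρ.1.1
  have hsub : {η : Matrix (Fin d) (Fin d) ℂ | IsDensityMatrix η ∧
        ∀ m ∈ Finset.Icc 1 d, 0 ≤ Sres ρ s' m η} ⊆
      {η : Matrix (Fin d) (Fin d) ℂ | IsDensityMatrix η ∧
        ∀ m ∈ Finset.Icc 1 d, 0 ≤ Sres ρ s m η} := by
    rintro η ⟨hηd, hm⟩
    refine ⟨hηd, ?_⟩
    rw [DRS.sres_iff hρH hηd.1.1 hs]
    rw [DRS.sres_iff hρH hηd.1.1 hs'] at hm
    have key : ((1 : ℂ) + (s : ℂ)) • η - ρ =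
        ((((1 : ℂ) + (s' : ℂ)) • η - ρ)) + (((s - s' : ℝ) : ℂ)) • η := by
      push_cast
      module
    rw [key]
    exact hm.add (DRS.smul_psd (by linarith) hηd.1)
  rw [Set.ssubset_iff_of_subset hsub]
  obtain ⟨i, hine⟩ : ∃ i, ρ i i ≠ 0 := by
    by_contra hc
    push_neg at hc
    have h0 : ρ.trace = 0 := by simp [Matrix.trace, Matrix.diag, hc]
    rw [hρ.2] at h0
    exact one_ne_zero h0
  have hipos : (0 : ℂ) < ρ i i := lt_of_le_of_ne (DRS.psd_diag_nonneg hρ.1 i) (Ne.symm hine)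
  obtain ⟨j, hj⟩ : ∃ j : Fin d, j ≠ i :=
    Fintype.exists_ne_of_one_lt_card (by simpa using by omega) i
  set σm : Matrix (Fin d) (Fin d) ℂ :=
    Matrix.diagonal (fun k => if k = j then (1 : ℂ) else 0) with hσm
  have hσpsd : σm.PosSemidef := by
    refine Matrix.posSemidef_diagonal_iff.mpr fun k => ?_
    split
    · exact zero_le_one
    · exact le_refl 0
  have hσtr : σm.trace = 1 := by
    simp [hσm, Matrix.trace_diagonal]
  have h1s : (0 : ℝ) < 1 + s := by linarith
  set η₀ : Matrix (Fin d) (Fin d) ℂ :=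
    (((1 + s)⁻¹ : ℝ) : ℂ) • (ρ + ((s : ℝ) : ℂ) • σm) with hη₀
  have hη₀psd : η₀.PosSemidef :=
    DRS.smul_psd (by positivity) (hρ.1.add (DRS.smul_psd hs.le hσpsd))
  have hη₀tr : η₀.trace = 1 := by
    rw [hη₀, Matrix.trace_smul, Matrix.trace_add, Matrix.trace_smul, hρ.2, hσtr]
    push_cast
    simp only [smul_eq_mul, mul_one]
    field_simp
  have hη₀d : IsDensityMatrix η₀ := ⟨hη₀psd, hη₀tr⟩
  have hone : ((1 : ℂ) + (s : ℂ)) * (((1 + s)⁻¹ : ℝ) : ℂ) = 1 := by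
    push_cast
    field_simp
  have hB : ((1 : ℂ) + (s : ℂ)) • η₀ - ρ = ((s : ℝ) : ℂ) • σm := by
    rw [hη₀, smul_smul, hone, one_smul, add_sub_cancel_left]
  refine ⟨η₀, ⟨hη₀d, ?_⟩, ?_⟩
  · rw [DRS.sres_iff hρH hη₀psd.1 hs, hB]
    exact DRS.smul_psd hs.le hσpsd
  · intro hmem
    have hm' := hmem.2
    rw [DRS.sres_iff hρH hη₀psd.1 hs'] at hm'
    have hdiag := DRS.psd_diag_nonneg hm' i
    have hσii : σm i i = 0 := by
      simp [hσm, Matrix.diagonal_apply_eq, (hj.symm : i ≠ j)]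
    have hBii : ((((1 : ℂ) + (s' : ℂ)) • η₀ - ρ) i i) =
        (((1 + s') * (1 + s)⁻¹ - 1 : ℝ) : ℂ) * ρ i i := by
      simp only [Matrix.sub_apply, Matrix.smul_apply, hη₀, Matrix.add_apply, hσii,
        smul_eq_mul, mul_zero, add_zero]
      push_cast
      ring
    rw [hBii] at hdiag
    have hre : 0 < (ρ i i).re := (Complex.lt_def.mp hipos).1
    have hc : (1 + s') * (1 + s)⁻¹ - 1 < 0 := by
      have h2 : (1 + s') * (1 + s)⁻¹ < 1 := by
        rw [← div_eq_mul_inv]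
        rw [div_lt_one h1s]
        linarith
      linarith
    have h3 := (Complex.nonneg_iff.mp hdiag).1
    rw [Complex.mul_re, Complex.ofReal_re, Complex.ofReal_im, zero_mul, sub_zero] at h3
    nlinarith
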